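/- For any semifilter S: if 𝔭_S ≤ ℵ₀ then 𝔭_S = 𝔱_S = ℵ₀. Consequently, under CH, 𝔭_S = 𝔱_S for every semifilter S. -/

import Mathlib

open Cardinal

def AlmostSub (A B : Set ℕ) : Prop := (A \ B).Finite

def IsSemifilter (S : Set (Set ℕ)) : Prop :=
  S.Nonempty ∧ S ≠ Set.univ ∧ ∀ A B : Set ℕ, A ∈ S → AlmostSub A B → B ∈ S

def CenteredIn (S F : Set (Set ℕ)) : Prop :=
  F ⊆ S ∧ ∀ T : Finset (Set ℕ), T.Nonempty → ↑T ⊆ F → ⋂₀ (T : Set (Set ℕ)) ∈ S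

def HasLowerBoundIn (S F : Set (Set ℕ)) : Prop :=
  ∃ A ∈ S, ∀ B ∈ F, AlmostSub A B

noncomputable def pInv (S : Set (Set ℕ)) : Cardinal :=
  sInf {c | ∃ F : Set (Set ℕ), CenteredIn S F ∧ ¬ HasLowerBoundIn S F ∧ c = #F}

noncomputable def tInv (S : Set (Set ℕ)) : Cardinal :=
  sInf {c | ∃ F : Set (Set ℕ), F ⊆ S ∧ IsChain AlmostSub F ∧
    ¬ HasLowerBoundIn S F ∧ c = #F}

lemma almostSub_refl (A : Set ℕ) : AlmostSub A A := by
  simp [AlmostSub]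

lemma almostSub_trans {A B C : Set ℕ} (h1 : AlmostSub A B) (h2 : AlmostSub B C) :
    AlmostSub A C := by
  have : A \ C ⊆ (A \ B) ∪ (B \ C) := by
    intro x hx
    by_cases hB : x ∈ B
    · exact Or.inr ⟨hB, hx.2⟩
    · exact Or.inl ⟨hx.1, hB⟩
  exact (h1.union h2).subset this

lemma almostSub_of_subset {A B : Set ℕ} (h : A ⊆ B) : AlmostSub A B := by
  have : A \ B = ∅ := Set.diff_eq_empty.mpr h
  simp [AlmostSub, this]

lemma chain_min (T : Finset (Set ℕ)) (hne : T.Nonempty)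
    (hch : IsChain AlmostSub (↑T : Set (Set ℕ))) :
    ∃ m ∈ T, ∀ b ∈ T, AlmostSub m b := by
  classical
  induction T using Finset.induction_on with
  | empty => simp at hne
  | @insert a T ha ih =>
    by_cases hT : T.Nonempty
    · obtain ⟨m, hm, hmin⟩ := ih hT (hch.mono (by intro x hx; simp [hx]))
      by_cases hma : AlmostSub m a
      · exact ⟨m, Finset.mem_insert_of_mem hm, fun b hb => by
          rcases Finset.mem_insert.mp hb with rfl | hb
          · exact hma
          · exact hmin b hb⟩
      · have ham : AlmostSub a m := by
          have hne' : a ≠ m := fun h => hma (h ▸ almostSub_refl a)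
          rcases hch (Finset.mem_coe.mpr (Finset.mem_insert_self a T)) (Finset.mem_coe.mpr (Finset.mem_insert_of_mem hm)) hne' with h | h
          · exact h
          · exact absurd h hma
        exact ⟨a, Finset.mem_insert_self a T, fun b hb => by
          rcases Finset.mem_insert.mp hb with rfl | hb
          · exact almostSub_refl b
          · exact almostSub_trans ham (hmin b hb)⟩
    · rw [Finset.not_nonempty_iff_eq_empty] at hT
      subst hT
      refine ⟨a, by simp, fun b hb => ?_⟩
      simp only [Finset.mem_insert, Finset.notMem_empty, or_false] at hb
      subst hb; exact almostSub_refl _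

lemma min_almostSub_sInter (T : Finset (Set ℕ)) {m : Set ℕ}
    (hmin : ∀ b ∈ T, AlmostSub m b) : AlmostSub m (⋂₀ (T : Set (Set ℕ))) := by
  have hsub : m \ ⋂₀ (T : Set (Set ℕ)) ⊆ ⋃ b ∈ T, m \ b := by
    intro x hx
    obtain ⟨b, hb, hxb⟩ : ∃ b ∈ (T : Set (Set ℕ)), x ∉ b := by
      by_contra h
      push_neg at h
      exact hx.2 (fun b hb => h b hb)
    exact Set.mem_biUnion hb ⟨hx.1, hxb⟩
  exact (Set.Finite.biUnion T.finite_toSet (fun b hb => hmin b hb)).subset hsub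

lemma chain_centered {S F : Set (Set ℕ)} (hS : IsSemifilter S) (hFS : F ⊆ S)
    (hch : IsChain AlmostSub F) : CenteredIn S F := by
  refine ⟨hFS, fun T hTne hTF => ?_⟩
  obtain ⟨m, hm, hmin⟩ := chain_min T hTne (hch.mono hTF)
  exact hS.2.2 m _ (hFS (hTF hm)) (min_almostSub_sInter T hmin)

lemma aleph0_le_of_centered_unbounded {S F : Set (Set ℕ)} (hS : IsSemifilter S)
    (hc : CenteredIn S F) (hub : ¬ HasLowerBoundIn S F) : ℵ₀ ≤ #F := by
  by_contra h
  push_neg at h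
  have hfin : F.Finite := lt_aleph0_iff_set_finite.mp h
  rcases F.eq_empty_or_nonempty with rfl | hne
  · exact hub ⟨hS.1.choose, hS.1.choose_spec, by simp⟩
  · have hT : (hfin.toFinset).Nonempty := by simpa using hne
    have hmem := hc.2 hfin.toFinset hT (by simp)
    refine hub ⟨_, hmem, fun B hB => almostSub_of_subset (Set.sInter_subset_of_mem ?_)⟩
    simpa using hB

lemma aleph0_le_of_chain_unbounded {S F : Set (Set ℕ)} (hS : IsSemifilter S)
    (hFS : F ⊆ S) (hch : IsChain AlmostSub F) (hub : ¬ HasLowerBoundIn S F) : ℵ₀ ≤ #F := by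
  by_contra h
  push_neg at h
  have hfin : F.Finite := lt_aleph0_iff_set_finite.mp h
  rcases F.eq_empty_or_nonempty with rfl | hne
  · exact hub ⟨hS.1.choose, hS.1.choose_spec, by simp⟩
  · have hT : (hfin.toFinset).Nonempty := by simpa using hne
    obtain ⟨m, hm, hmin⟩ := chain_min hfin.toFinset hT (hch.mono (by simp))
    exact hub ⟨m, hFS (by simpa using hm), fun B hB => hmin B (by simpa using hB)⟩

lemma exists_countable_chain_unbounded {S : Set (Set ℕ)} (hS : IsSemifilter S)
    {F : Set (Set ℕ)} (hc : CenteredIn S F) (hub : ¬ HasLowerBoundIn S F)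
    (hcard : #F ≤ ℵ₀) :
    ∃ G : Set (Set ℕ), G ⊆ S ∧ IsChain AlmostSub G ∧ ¬ HasLowerBoundIn S G ∧ #G ≤ ℵ₀ := by
  classical
  have hcount : F.Countable := mk_le_aleph0_iff.mp hcard
  have hne : F.Nonempty := by
    rcases F.eq_empty_or_nonempty with rfl | h
    · exact absurd ⟨hS.1.choose, hS.1.choose_spec, by simp⟩ hub
    · exact h
  obtain ⟨f, rfl⟩ := hcount.exists_eq_range hne
  set B : ℕ → Set ℕ := fun n => ⋂₀ ↑((Finset.range (n+1)).image f) with hB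
  have hBmem : ∀ n, B n ∈ S := by
    intro n
    refine hc.2 _ ⟨f 0, by simp; exact ⟨0, by omega, rfl⟩⟩ ?_
    intro x hx
    simp only [Finset.coe_image, Set.mem_image, Finset.mem_coe] at hx
    obtain ⟨i, _, rfl⟩ := hx
    exact Set.mem_range_self i
  have hBmono : ∀ {m n : ℕ}, m ≤ n → B n ⊆ B m := by
    intro m n hmn x hx b hb
    apply hx
    simp only [Finset.coe_image, Set.mem_image, Finset.mem_coe, Finset.mem_range] at hb ⊢
    obtain ⟨i, hi, rfl⟩ := hb
    exact ⟨i, by omega, rfl⟩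
  have hBsub : ∀ n, B n ⊆ f n := by
    intro n
    apply Set.sInter_subset_of_mem
    simp only [Finset.coe_image, Set.mem_image, Finset.mem_coe, Finset.mem_range]
    exact ⟨n, by omega, rfl⟩
  refine ⟨Set.range B, ?_, ?_, ?_, mk_range_le.trans (by simp)⟩
  · rintro _ ⟨n, rfl⟩; exact hBmem n
  · rintro _ ⟨m, rfl⟩ _ ⟨n, rfl⟩ _
    rcases le_total m n with h | h
    · exact Or.inr (almostSub_of_subset (hBmono h))
    · exact Or.inl (almostSub_of_subset (hBmono h))
  · rintro ⟨A, hA, hbd⟩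
    refine hub ⟨A, hA, ?_⟩
    rintro _ ⟨n, rfl⟩
    exact almostSub_trans (hbd (B n) ⟨n, rfl⟩) (almostSub_of_subset (hBsub n))

/-- If `𝔭_S ≤ ℵ₀` then `𝔭_S = 𝔱_S = ℵ₀`; consequently, under CH, `𝔭_S = 𝔱_S` for every
semifilter `S`.  (The existence hypotheses reflect the paper's standing assumption that
unbounded centered families and unbounded chains exist in `S`.) -/
theorem pInv_eq_tInv_of_countable :
    (∀ S : Set (Set ℕ), IsSemifilter S →
      (∃ F : Set (Set ℕ), CenteredIn S F ∧ ¬ HasLowerBoundIn S F) →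
      pInv S ≤ ℵ₀ → pInv S = ℵ₀ ∧ tInv S = ℵ₀) ∧
    (Cardinal.continuum = Cardinal.aleph 1 →
      ∀ S : Set (Set ℕ), IsSemifilter S →
        (∃ F : Set (Set ℕ), CenteredIn S F ∧ ¬ HasLowerBoundIn S F) →
        (∃ F : Set (Set ℕ), F ⊆ S ∧ IsChain AlmostSub F ∧ ¬ HasLowerBoundIn S F) →
        pInv S = tInv S) := by
  have main : ∀ S : Set (Set ℕ), IsSemifilter S →
      (∃ F : Set (Set ℕ), CenteredIn S F ∧ ¬ HasLowerBoundIn S F) →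
      pInv S ≤ ℵ₀ → pInv S = ℵ₀ ∧ tInv S = ℵ₀ := by
    rintro S hS ⟨F0, hF0c, hF0u⟩ hple
    have hPne : {c | ∃ F : Set (Set ℕ), CenteredIn S F ∧ ¬ HasLowerBoundIn S F ∧ c = #F}.Nonempty :=
      ⟨#F0, F0, hF0c, hF0u, rfl⟩
    have hPge : ℵ₀ ≤ pInv S := by
      apply le_csInf hPne
      rintro c ⟨F, hc, hub, rfl⟩
      exact aleph0_le_of_centered_unbounded hS hc hub
    have hp : pInv S = ℵ₀ := le_antisymm hple hPge
    have hmem : pInv S ∈ {c | ∃ F : Set (Set ℕ), CenteredIn S F ∧ ¬ HasLowerBoundIn S F ∧ c = #F} :=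
      csInf_mem hPne
    obtain ⟨F, hc, hub, hcard⟩ := hmem
    obtain ⟨G, hGS, hGch, hGub, hGcard⟩ :=
      exists_countable_chain_unbounded hS hc hub (hcard ▸ hple)
    have hTmem : #G ∈ {c | ∃ F : Set (Set ℕ), F ⊆ S ∧ IsChain AlmostSub F ∧
        ¬ HasLowerBoundIn S F ∧ c = #F} := ⟨G, hGS, hGch, hGub, rfl⟩
    have hTle : tInv S ≤ ℵ₀ := le_trans (csInf_le' hTmem) hGcard
    have hTge : ℵ₀ ≤ tInv S := by
      apply le_csInf ⟨#G, hTmem⟩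
      rintro c ⟨F, hFS, hch, hub', rfl⟩
      exact aleph0_le_of_chain_unbounded hS hFS hch hub'
    exact ⟨hp, le_antisymm hTle hTge⟩
  refine ⟨main, ?_⟩
  rintro hCH S hS hP ⟨Ft, hFtS, hFtch, hFtu⟩
  have hple : pInv S ≤ tInv S := by
    refine le_csInf ⟨#Ft, Ft, hFtS, hFtch, hFtu, rfl⟩ ?_
    rintro c ⟨F, hFS, hch, hub, rfl⟩
    exact csInf_le' ⟨F, chain_centered hS hFS hch, hub, rfl⟩
  by_cases h : pInv S ≤ ℵ₀
  · obtain ⟨h1, h2⟩ := main S hS hP h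
    rw [h1, h2]
  · push_neg at h
    have hsucc : Cardinal.aleph 1 ≤ pInv S := by
      rw [← Cardinal.succ_aleph0]
      exact Order.succ_le_of_lt h
    have hCH0 : (Cardinal.continuum : Cardinal) ≤ Cardinal.aleph 1 := by
      have h1 := hCH.le
      rw [← Cardinal.lift_continuum.{_, 0}] at h1
      exact Cardinal.lift_le_aleph_one.mp h1
    have htle : tInv S ≤ Cardinal.continuum := by
      refine le_trans (csInf_le' ⟨Ft, hFtS, hFtch, hFtu, rfl⟩) ?_
      calc #Ft ≤ #(Set ℕ) := mk_set_le Ft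
        _ = 2 ^ ℵ₀ := by simp [Cardinal.mk_set]
        _ = Cardinal.continuum := Cardinal.two_power_aleph0
    exact le_antisymm hple (le_trans htle (hCH0.trans hsucc))
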